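/- Let S be an even positive integer and N_B, N_C even positive integers. Suppose R ∈ ℝ^{(S·N_B)×(S·N_C)} is simultaneously block-circulant of order S with N_B×N_C blocks, R ∈ BC(S,N_B,N_C) with blocks r_0, …, r_{S−1} ∈ ℝ^{N_B×N_C} (so that R = Σ_{k=0}^{S−1} Ω_S^k ⊗ r_k), and centrosymmetric, R·J_{S·N_C} = J_{S·N_B}·R. Then the blocks r_0 and r_{S/2} are themselves centrosymmetric: r_0·J_{N_C} = J_{N_B}·r_0 and r_{S/2}·J_{N_C} = J_{N_B}·r_{S/2}. -/

import Mathlib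

open Matrix Kronecker Fin.NatCast

/-- The cyclic shift permutation matrix `Ω_n` with `(Ω_n)_{i,j} = 1` iff `j ≡ i+1 (mod n)`. -/
def cyclicShift (n : ℕ) : Matrix (Fin n) (Fin n) ℝ :=
  Matrix.of fun i j => if (j : ℕ) = ((i : ℕ) + 1) % n then 1 else 0

/-- The exchange matrix `J_n` with ones on the anti-diagonal and zeros elsewhere. -/
def exchMatrix (n : ℕ) : Matrix (Fin n) (Fin n) ℝ :=
  Matrix.of fun i j => if (i : ℕ) + (j : ℕ) = n - 1 then 1 else 0

lemma exch_apply (n : ℕ) (i j : Fin n) :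
    exchMatrix n i j = if i = Fin.rev j then 1 else 0 := by
  unfold exchMatrix
  simp only [Matrix.of_apply]
  apply if_congr _ rfl rfl
  rw [Fin.ext_iff, Fin.val_rev]
  have := i.isLt; have := j.isLt
  omega

lemma cyclicShift_pow (S : ℕ) [NeZero S] (k : ℕ) : ∀ (i j : Fin S),
    (cyclicShift S ^ k) i j = if (j : ℕ) = ((i : ℕ) + k) % S then 1 else 0 := by
  induction k with
  | zero =>
    intro i j
    simp only [pow_zero, Matrix.one_apply, Nat.add_zero, Nat.mod_eq_of_lt i.isLt, Fin.ext_iff]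
    exact if_congr eq_comm rfl rfl
  | succ k ih =>
    intro i j
    rw [pow_succ, Matrix.mul_apply]
    have hpos : 0 < S := Nat.pos_of_ne_zero (NeZero.ne S)
    rw [Finset.sum_eq_single (⟨((i : ℕ) + k) % S, Nat.mod_lt _ hpos⟩ : Fin S)]
    · rw [ih]
      simp only [cyclicShift, Matrix.of_apply, if_pos rfl, one_mul]
      rw [Nat.mod_add_mod]
      simp [Nat.add_assoc]
    · intro m _ hm
      rw [ih, if_neg, zero_mul]
      intro h
      exact hm (Fin.ext h)
    · simp

lemma exchK_apply (m n : ℕ) (x : Fin m × Fin n) (y : Fin m × Fin n) :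
    (exchMatrix m ⊗ₖ exchMatrix n) x y =
      if x = (Fin.rev y.1, Fin.rev y.2) then 1 else 0 := by
  rcases x with ⟨a, b⟩; rcases y with ⟨c, d⟩
  simp only [Matrix.kroneckerMap_apply, exch_apply, Prod.mk.injEq, Prod.ext_iff]
  by_cases h1 : a = Fin.rev c <;> by_cases h2 : b = Fin.rev d <;> simp [h1, h2]

lemma mul_exchK {m n : ℕ} {α : Type*} [Fintype α] (M : Matrix α (Fin m × Fin n) ℝ)
    (x : α) (j : Fin m) (b : Fin n) :
    (M * (exchMatrix m ⊗ₖ exchMatrix n)) x (j, b) = M x (Fin.rev j, Fin.rev b) := by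
  rw [Matrix.mul_apply]
  rw [Finset.sum_eq_single ((Fin.rev j, Fin.rev b) : Fin m × Fin n)]
  · rw [exchK_apply, if_pos rfl, mul_one]
  · intro z _ hz
    rw [exchK_apply, if_neg (by simpa using hz), mul_zero]
  · simp

lemma exchK_mul {m n : ℕ} {α : Type*} [Fintype α] (M : Matrix (Fin m × Fin n) α ℝ)
    (i : Fin m) (a : Fin n) (y : α) :
    ((exchMatrix m ⊗ₖ exchMatrix n) * M) (i, a) y = M (Fin.rev i, Fin.rev a) y := by
  rw [Matrix.mul_apply]
  rw [Finset.sum_eq_single ((Fin.rev i, Fin.rev a) : Fin m × Fin n)]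
  · rw [exchK_apply, if_pos (by simp [Fin.rev_rev]), one_mul]
  · intro z _ hz
    rw [exchK_apply, if_neg, zero_mul]
    intro h
    apply hz
    rw [Prod.ext_iff] at h ⊢
    simp only at h
    simp [h.1, h.2, Fin.rev_rev]
  · simp

lemma Rentry_apply (S N_B N_C : ℕ) [NeZero S]
    (r : Fin S → Matrix (Fin N_B) (Fin N_C) ℝ)
    (i : Fin S) (a : Fin N_B) (j : Fin S) (b : Fin N_C) :
    (∑ k : Fin S, (cyclicShift S ^ (k : ℕ)) ⊗ₖ r k) (i, a) (j, b) = r (j - i) a b := by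
  rw [Matrix.sum_apply]
  rw [Finset.sum_eq_single (j - i)]
  · rw [Matrix.kroneckerMap_apply, cyclicShift_pow, if_pos, one_mul]
    have h : i + (j - i) = j := by abel
    show (j : ℕ) = ((i : ℕ) + ((j - i : Fin S) : ℕ)) % S
    rw [← Fin.val_add, h]
  · intro k _ hk
    rw [Matrix.kroneckerMap_apply, cyclicShift_pow, if_neg, zero_mul]
    intro h
    apply hk
    have h2 : i + k = j := Fin.ext (by rw [Fin.val_add]; exact h.symm)
    exact eq_sub_of_add_eq' h2
  · simp

lemma mul_exch {n : ℕ} {α : Type*} [Fintype α] (M : Matrix α (Fin n) ℝ)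
    (x : α) (j : Fin n) :
    (M * exchMatrix n) x j = M x (Fin.rev j) := by
  rw [Matrix.mul_apply, Finset.sum_eq_single (Fin.rev j)]
  · rw [exch_apply, if_pos rfl, mul_one]
  · intro z _ hz
    rw [exch_apply, if_neg hz, mul_zero]
  · simp

lemma exch_mul {n : ℕ} {α : Type*} [Fintype α] (M : Matrix (Fin n) α ℝ)
    (i : Fin n) (y : α) :
    (exchMatrix n * M) i y = M (Fin.rev i) y := by
  rw [Matrix.mul_apply, Finset.sum_eq_single (Fin.rev i)]
  · rw [exch_apply, if_pos (Fin.rev_rev i).symm, one_mul]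
  · intro z _ hz
    rw [exch_apply, if_neg, zero_mul]
    intro h
    exact hz (by rw [h, Fin.rev_rev])
  · simp

theorem blocks_r0_rhalf_centrosymmetric
    (S N_B N_C : ℕ) [NeZero S] (hSeven : Even S)
    (hNB : 0 < N_B) (hNC : 0 < N_C) (hNBeven : Even N_B) (hNCeven : Even N_C)
    (r : Fin S → Matrix (Fin N_B) (Fin N_C) ℝ)
    (R : Matrix (Fin S × Fin N_B) (Fin S × Fin N_C) ℝ)
    (hR : R = ∑ k : Fin S, (cyclicShift S ^ (k : ℕ)) ⊗ₖ r k)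
    (hcs : R * (exchMatrix S ⊗ₖ exchMatrix N_C) = (exchMatrix S ⊗ₖ exchMatrix N_B) * R) :
    r 0 * exchMatrix N_C = exchMatrix N_B * r 0 ∧
      r ((S / 2 : ℕ) : Fin S) * exchMatrix N_C = exchMatrix N_B * r ((S / 2 : ℕ) : Fin S) := by
  have hpos : 0 < S := Nat.pos_of_ne_zero (NeZero.ne S)
  have key : ∀ (i : Fin S) (a : Fin N_B) (j : Fin S) (b : Fin N_C),
      r (Fin.rev j - i) a (Fin.rev b) = r (j - Fin.rev i) (Fin.rev a) b := by
    intro i a j b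
    have h := congrFun (congrFun hcs (i, a)) (j, b)
    rw [mul_exchK, exchK_mul, hR, Rentry_apply, Rentry_apply] at h
    exact h
  constructor
  · ext a b
    rw [mul_exch, exch_mul]
    have h := key 0 a (Fin.rev 0) b
    rw [Fin.rev_rev] at h; simp only [sub_self] at h
    exact h
  · ext a b
    rw [mul_exch, exch_mul]
    have h := key 0 a (Fin.rev ((S / 2 : ℕ) : Fin S)) b
    rw [Fin.rev_rev, sub_zero] at h
    have hc : (Fin.rev ((S / 2 : ℕ) : Fin S) - Fin.rev 0) = ((S / 2 : ℕ) : Fin S) := by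
      have hm2 : S / 2 < S := Nat.div_lt_self hpos one_lt_two
      obtain ⟨m, hm⟩ := hSeven
      apply Fin.ext
      rw [Fin.sub_def]
      simp only [Fin.val_rev, Fin.val_natCast, Fin.val_zero]
      rw [Nat.mod_eq_of_lt hm2]
      rw [Nat.mod_eq_of_lt (by omega)]
      omega
    rw [hc] at h
    exact h
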